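/- Let σ be a permutation of [n] and m ≤ n. Define Δ_σ to be the set of unordered pairs {i,j} of distinct elements of [m] such that {i,j} ≠ {σ(i),σ(j)}. If σ moves exactly k elements of [m] (i.e., |{i ∈ [m] : σ(i) ≠ i}| = k) with k ≥ 1 and m > 6, then mk/3 ≤ |Δ_σ| ≤ mk. -/

import Mathlib

open BigOperators

/-- `Δ_σ`: unordered pairs `{i,j}` of distinct elements of `[m]` (encoded as ordered
pairs with `i < j`) such that `{i,j} ≠ {σ i, σ j}`. -/
def deltaSet {n : ℕ} (m : ℕ) (σ : Equiv.Perm (Fin n)) : Finset (Fin n × Fin n) :=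
  Finset.univ.filter fun p =>
    p.1 < p.2 ∧ p.1.val < m ∧ p.2.val < m ∧
      ({σ p.1, σ p.2} : Finset (Fin n)) ≠ ({p.1, p.2} : Finset (Fin n))

/-- The number of elements of `[m]` moved by `σ`. -/
def movedCount {n : ℕ} (m : ℕ) (σ : Equiv.Perm (Fin n)) : ℕ :=
  (Finset.univ.filter fun i : Fin n => i.val < m ∧ σ i ≠ i).card

lemma card_Fm {n m : ℕ} (hmn : m ≤ n) :
    (Finset.univ.filter fun i : Fin n => i.val < m).card = m := by
  rw [← Finset.card_range m]
  apply Finset.card_bij (fun i _ => i.val)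
  · intro a ha; simpa using (Finset.mem_filter.1 ha).2
  · intro a ha b hb h; exact Fin.val_injective h
  · intro b hb
    refine ⟨⟨b, lt_of_lt_of_le (Finset.mem_range.1 hb) hmn⟩, ?_, rfl⟩
    simp [Finset.mem_range.1 hb]

/-- if `σ` moves exactly `k ≥ 1` elements of `[m]`, `m ≤ n` and `m > 6`,
then `mk/3 ≤ |Δ_σ| ≤ mk`. -/
theorem deltaSet_card_bounds {n m : ℕ} (hmn : m ≤ n) (hm : 6 < m)
    (σ : Equiv.Perm (Fin n)) (k : ℕ) (hk : movedCount m σ = k) (hk1 : 1 ≤ k) :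
    (m * k : ℝ) / 3 ≤ ((deltaSet m σ).card : ℝ) ∧
      ((deltaSet m σ).card : ℝ) ≤ (m * k : ℝ) := by
  classical
  set M : Finset (Fin n) := Finset.univ.filter fun i : Fin n => i.val < m ∧ σ i ≠ i with hM
  have hMk : M.card = k := hk
  set Fm : Finset (Fin n) := Finset.univ.filter fun i : Fin n => i.val < m with hFm
  have hFmc : Fm.card = m := card_Fm hmn
  -- membership facts
  have memM : ∀ i, i ∈ M ↔ i.val < m ∧ σ i ≠ i := by intro i; simp [hM]
  have memFm : ∀ i, i ∈ Fm ↔ i.val < m := by intro i; simp [hFm]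
  have memD : ∀ p : Fin n × Fin n, p ∈ deltaSet m σ ↔
      p.1 < p.2 ∧ p.1.val < m ∧ p.2.val < m ∧
        ({σ p.1, σ p.2} : Finset (Fin n)) ≠ ({p.1, p.2} : Finset (Fin n)) := by
    intro p; simp [deltaSet]
  -- key: if both fixed, pair not in Δ; so every Δ pair has a moved coordinate
  have hmoved : ∀ p ∈ deltaSet m σ, σ p.1 ≠ p.1 ∨ σ p.2 ≠ p.2 := by
    intro p hp
    by_contra h
    push_neg at h
    exact ((memD p).1 hp).2.2.2 (by rw [h.1, h.2])
  -- Upper bound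
  have hub : (deltaSet m σ).card ≤ k * m := by
    have : (deltaSet m σ).card ≤ (M ×ˢ Fm).card := by
      apply Finset.card_le_card_of_injOn
        (fun p => if σ p.1 ≠ p.1 then p else (p.2, p.1))
      · intro p hp
        obtain ⟨h12, h1m, h2m, hne⟩ := (memD p).1 hp
        by_cases hc : σ p.1 ≠ p.1
        · dsimp only; rw [if_pos hc]
          exact Finset.mem_product.2 ⟨(memM _).2 ⟨h1m, hc⟩, (memFm _).2 h2m⟩
        · have h2 : σ p.2 ≠ p.2 := by
            rcases hmoved p hp with h | h
            · exact absurd h hc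
            · exact h
          dsimp only; rw [if_neg hc]
          exact Finset.mem_product.2 ⟨(memM _).2 ⟨h2m, h2⟩, (memFm _).2 h1m⟩
      · intro p hp q hq hpq
        simp only at hpq
        obtain ⟨hp12, _, _, _⟩ := (memD p).1 hp
        obtain ⟨hq12, _, _, _⟩ := (memD q).1 hq
        split_ifs at hpq with h1 h2 h2
        · exact hpq
        · exfalso
          have : p.1 = q.2 ∧ p.2 = q.1 := Prod.mk.injEq .. ▸ Prod.ext_iff.1 hpq
          rw [this.1, this.2] at hp12
          exact absurd (hp12.trans hq12) (lt_irrefl _)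
        · exfalso
          have : p.2 = q.1 ∧ p.1 = q.2 := Prod.ext_iff.1 hpq
          rw [← this.1, ← this.2] at hq12
          exact absurd (hq12.trans hp12) (lt_irrefl _)
        · have : p.2 = q.2 ∧ p.1 = q.1 := Prod.ext_iff.1 hpq
          exact Prod.ext this.2 this.1
    simpa [Finset.card_product, hMk, hFmc] using this
  -- Lower bound: set T of ordered "good" pairs
  set T : Finset (Fin n × Fin n) := (M ×ˢ Fm).filter
    (fun p => p.2 ≠ p.1 ∧ ¬(σ p.1 = p.2 ∧ σ p.2 = p.1)) with hT
  have memT : ∀ p : Fin n × Fin n, p ∈ T ↔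
      (p.1 ∈ M ∧ p.2 ∈ Fm) ∧ p.2 ≠ p.1 ∧ ¬(σ p.1 = p.2 ∧ σ p.2 = p.1) := by
    intro p; simp [hT, Finset.mem_product, and_assoc]
  -- T.card ≥ k * (m - 2)
  have hTlb : k * (m - 2) ≤ T.card := by
    have hfib : T.card = ∑ i ∈ M, (T.filter fun p => p.1 = i).card :=
      Finset.card_eq_sum_card_fiberwise (fun p hp => ((memT p).1 hp).1.1)
    have hbound : ∀ i ∈ M, m - 2 ≤ (T.filter fun p => p.1 = i).card := by
      intro i hi
      have hJ : m - 2 ≤ (Fm.filter fun j => j ≠ i ∧ ¬(σ i = j ∧ σ j = i)).card := by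
        have hsub : Fm.filter (fun j => ¬(j ≠ i ∧ ¬(σ i = j ∧ σ j = i)))
            ⊆ {i, σ i} := by
          intro j hj
          obtain ⟨_, hj2⟩ := Finset.mem_filter.1 hj
          push_neg at hj2
          by_cases hji : j = i
          · simp [hji]
          · simp [hj2 hji |>.1]
        have h2 : (Fm.filter fun j => ¬(j ≠ i ∧ ¬(σ i = j ∧ σ j = i))).card ≤ 2 :=
          le_trans (Finset.card_le_card hsub) (Finset.card_insert_le _ _ |>.trans (by simp))
        have := Finset.card_filter_add_card_filter_not
          (s := Fm) (p := fun j => j ≠ i ∧ ¬(σ i = j ∧ σ j = i))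
        omega
      refine le_trans hJ (Finset.card_le_card_of_injOn (fun j => (i, j)) ?_ ?_)
      · intro j hj
        have hj' := Finset.mem_filter.1 hj
        exact Finset.mem_filter.2 ⟨(memT _).2 ⟨⟨hi, hj'.1⟩, hj'.2.1, hj'.2.2⟩, rfl⟩
      · intro a _ b _ h; exact (Prod.ext_iff.1 h).2
    calc k * (m - 2) = M.card • (m - 2) := by rw [hMk]; simp [smul_eq_mul]
      _ ≤ ∑ i ∈ M, (T.filter fun p => p.1 = i).card :=
          Finset.card_nsmul_le_sum _ _ _ hbound
      _ = T.card := hfib.symm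
  -- T maps to Δ with fibers ≤ 2
  have hT2 : T.card ≤ 2 * (deltaSet m σ).card := by
    apply Finset.card_le_mul_card_image_of_maps_to
      (f := fun p => if p.1 < p.2 then p else (p.2, p.1))
    · intro p hp
      obtain ⟨⟨h1M, h2F⟩, hne, hnp⟩ := (memT p).1 hp
      obtain ⟨h1m, h1mv⟩ := (memM _).1 h1M
      have h2m := (memFm _).1 h2F
      have hpair : ({σ p.1, σ p.2} : Finset (Fin n)) ≠ ({p.1, p.2} : Finset (Fin n)) := by
        intro heq
        have hs1 : σ p.1 ∈ ({p.1, p.2} : Finset (Fin n)) := by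
          rw [← heq]; simp
        have hs1' : σ p.1 = p.2 := by
          rcases Finset.mem_insert.1 hs1 with h | h
          · exact absurd h h1mv
          · simpa using h
        have hs2 : σ p.2 ∈ ({p.1, p.2} : Finset (Fin n)) := by
          rw [← heq]; simp
        have hs2' : σ p.2 = p.1 := by
          rcases Finset.mem_insert.1 hs2 with h | h
          · exact h
          · exfalso
            have hh : σ p.2 = p.2 := by simpa using h
            have : p.1 = p.2 := σ.injective (by rw [hs1', hh])
            exact hne this.symm
        exact hnp ⟨hs1', hs2'⟩
      by_cases hlt : p.1 < p.2
      · simp only [hlt, if_pos]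
        exact (memD p).2 ⟨hlt, h1m, h2m, hpair⟩
      · have hlt' : p.2 < p.1 := lt_of_le_of_ne (not_lt.1 hlt) hne
        simp only [hlt, if_neg, if_false]
        refine (memD _).2 ⟨hlt', h2m, h1m, ?_⟩
        intro heq
        exact hpair (by rw [Finset.pair_comm (σ p.1), heq, Finset.pair_comm])
    · intro b _
      have hsub : (T.filter fun p => (if p.1 < p.2 then p else (p.2, p.1)) = b)
          ⊆ {b, (b.2, b.1)} := by
        intro p hp
        obtain ⟨_, hpb⟩ := Finset.mem_filter.1 hp
        by_cases hlt : p.1 < p.2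
        · simp only [hlt, if_pos] at hpb; simp [hpb]
        · simp only [hlt, if_neg, if_false] at hpb
          have : p = (b.2, b.1) := by
            have := Prod.ext_iff.1 hpb
            exact Prod.ext (by simp [← this.2]) (by simp [← this.1])
          simp [this]
      exact le_trans (Finset.card_le_card hsub)
        (le_trans (Finset.card_insert_le _ _) (by simp))
  -- arithmetic wrap-up
  have hub' : ((deltaSet m σ).card : ℝ) ≤ (m * k : ℝ) := by
    have := (Nat.cast_le (α := ℝ)).2 hub
    push_cast at this ⊢
    linarith
  refine ⟨?_, hub'⟩
  have h1 : (k * (m - 2) : ℝ) ≤ 2 * ((deltaSet m σ).card : ℝ) := by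
    have := (Nat.cast_le (α := ℝ)).2 (le_trans hTlb hT2)
    push_cast [Nat.cast_sub (by omega : 2 ≤ m)] at this
    linarith
  have hm' : (6 : ℝ) < m := by exact_mod_cast hm
  have hk' : (1 : ℝ) ≤ k := by exact_mod_cast hk1
  nlinarith
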